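/- Let G be a graph on the vertex set [n−1] with n ≥ 2, and let Ĝ be its suspension. Then N(P_{Ĝ}) ≥ 2^{n−1}, and equality holds if and only if G has no edges (so that Ĝ is the star graph K_{1,n−1}). -/

import Mathlib

open Finset

/-- The symmetric edge polytope of a finite simple graph `G`: the convex hull of the
vectors `e_i - e_j` for all adjacent pairs `i, j`. -/
def symEdgePolytope {V : Type*} [DecidableEq V] (G : SimpleGraph V) : Set (V → ℝ) :=
  convexHull ℝ {x : V → ℝ | ∃ i j : V, G.Adj i j ∧
    x = fun k => (if k = i then (1 : ℝ) else 0) - (if k = j then (1 : ℝ) else 0)}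

/-- A facet of a polytope `P`: a maximal proper (exposed) face of `P`. -/
def IsFacet {V : Type*} (P F : Set (V → ℝ)) : Prop :=
  IsExposed ℝ P F ∧ F ≠ P ∧
    ∀ F' : Set (V → ℝ), IsExposed ℝ P F' → F' ≠ P → F ⊆ F' → F' = F

/-- `N(P)`: the number of facets of a polytope `P`. -/
noncomputable def numFacets {V : Type*} (P : Set (V → ℝ)) : ℕ :=
  Set.ncard {F : Set (V → ℝ) | IsFacet P F}

/-- The suspension `Ĝ` of a graph `G`: a new apex vertex (`none`) is joined to all
vertices of `G`. -/
def suspension {V : Type*} (G : SimpleGraph V) : SimpleGraph (Option V) where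
  Adj x y :=
    match x, y with
    | some a, some b => G.Adj a b
    | some _, none => True
    | none, some _ => True
    | none, none => False
  symm := by
    constructor
    rintro (_ | a) (_ | b) h
    · exact h
    · trivial
    · trivial
    · exact h.symm
  loopless := by
    constructor
    rintro (_ | a) h
    · exact h
    · exact G.irrefl h

namespace SEP

open scoped Classical

variable {V : Type*} [Fintype V] [DecidableEq V]
set_option linter.unusedSectionVars false

/-- generator vector `e_i - e_j`. -/
def gen (i j : Option V) : Option V → ℝ :=
  fun k => (if k = i then (1 : ℝ) else 0) - (if k = j then (1 : ℝ) else 0)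

lemma gen_neg (i j : Option V) : gen j i = -gen i j := by
  funext k; simp only [gen, Pi.neg_apply]; ring

/-- the linear functional `x ↦ ∑ c w * x w`. -/
noncomputable def L (c : Option V → ℝ) : (Option V → ℝ) →L[ℝ] ℝ :=
  ∑ w : Option V, c w • ContinuousLinearMap.proj w

lemma L_apply (c : Option V → ℝ) (x : Option V → ℝ) :
    L c x = ∑ w : Option V, c w * x w := by
  simp [L, ContinuousLinearMap.sum_apply, ContinuousLinearMap.proj_apply]

lemma L_gen (c : Option V → ℝ) (i j : Option V) : L c (gen i j) = c i - c j := by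
  rw [L_apply]
  have : ∀ w : Option V, c w * gen i j w
      = (if w = i then c w else 0) - (if w = j then c w else 0) := by
    intro w
    simp only [gen]
    split_ifs <;> ring
  rw [Finset.sum_congr rfl fun w _ => this w, Finset.sum_sub_distrib,
    Finset.sum_ite_eq' Finset.univ i c, Finset.sum_ite_eq' Finset.univ j c]
  simp

lemma isLinear_L (c : Option V → ℝ) : IsLinearMap ℝ (fun x => L c x) :=
  ⟨fun a b => (L c).map_add a b, fun r a => (L c).map_smul r a⟩

section hull

variable {s : Set (Option V → ℝ)} {l : (Option V → ℝ) →L[ℝ] ℝ} {r : ℝ}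

lemma hull_le (h : ∀ y ∈ s, l y ≤ r) : ∀ x ∈ convexHull ℝ s, l x ≤ r := by
  intro x hx
  exact convexHull_min h (convex_halfSpace_le ⟨l.map_add, fun a b => l.map_smul a b⟩ r) hx

/-- Lemma B : points of the hull where a linear functional attains its max over a
finite generating set lie in the hull of the maximizers. -/
lemma mem_hull_max {t : Finset (Option V → ℝ)} {M : ℝ}
    (hle : ∀ y ∈ t, l y ≤ M) {x : Option V → ℝ}
    (hx : x ∈ convexHull ℝ (↑t : Set (Option V → ℝ))) (hxM : l x = M) :
    x ∈ convexHull ℝ {y ∈ (↑t : Set (Option V → ℝ)) | l y = M} := by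
  rw [Finset.convexHull_eq] at hx
  obtain ⟨w, hw0, hw1, hcm⟩ := hx
  have hxsum : x = ∑ y ∈ t, w y • y := by
    rw [← hcm, Finset.centerMass, hw1]; simp
  have hlx : l x = ∑ y ∈ t, w y * l y := by
    rw [hxsum, map_sum]; simp only [map_smul, smul_eq_mul]
  have hzero : ∀ y ∈ t, w y * (M - l y) = 0 := by
    have hsum0 : ∑ y ∈ t, w y * (M - l y) = 0 := by
      have : ∑ y ∈ t, w y * (M - l y) = M * (∑ y ∈ t, w y) - ∑ y ∈ t, w y * l y := by
        rw [Finset.mul_sum, ← Finset.sum_sub_distrib]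
        exact Finset.sum_congr rfl fun y _ => by ring
      rw [this, hw1, ← hlx, hxM]; ring
    have hnn : ∀ y ∈ t, 0 ≤ w y * (M - l y) := fun y hy =>
      mul_nonneg (hw0 y hy) (by linarith [hle y hy])
    exact (Finset.sum_eq_zero_iff_of_nonneg hnn).mp hsum0
  set t' : Finset (Option V → ℝ) := t.filter (fun y => l y = M) with ht'
  have hwz : ∀ y ∈ t, y ∉ t' → w y = 0 := by
    intro y hy hyn
    rcases mul_eq_zero.mp (hzero y hy) with h | h
    · exact h
    · exact absurd (by simp [ht', hy]; linarith) hyn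
  have hsub : t' ⊆ t := Finset.filter_subset _ _
  have hw1' : ∑ y ∈ t', w y = 1 := by
    rw [← hw1]
    exact (Finset.sum_subset hsub (fun y hy hyn => hwz y hy hyn)).symm ▸ rfl
  have hxsum' : x = ∑ y ∈ t', w y • y := by
    rw [hxsum]
    exact (Finset.sum_subset hsub (fun y hy hyn => by rw [hwz y hy hyn, zero_smul])).symm
  have : x ∈ convexHull ℝ (↑t' : Set (Option V → ℝ)) := by
    have := centerMass_mem_convexHull t' (w := w) (fun y hy => hw0 y (hsub hy))
      (by rw [hw1']; norm_num) (z := id) (fun y hy => Finset.mem_coe.mpr hy)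
    simp only [Finset.centerMass, hw1', inv_one, one_smul, id] at this
    rwa [← hxsum'] at this
  refine convexHull_mono ?_ this
  intro y hy
  rw [Finset.mem_coe, ht', Finset.mem_filter] at hy
  exact ⟨hy.1, hy.2⟩

end hull


variable (G : SimpleGraph V)

def SS : Set (Option V → ℝ) := {x | ∃ i j, (suspension G).Adj i j ∧ x = gen i j}

lemma symEdge_eq : symEdgePolytope (suspension G) = convexHull ℝ (SS G) := rfl

noncomputable def T : Finset (Option V → ℝ) :=
  (Finset.univ.filter (fun p : Option V × Option V => (suspension G).Adj p.1 p.2)).image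
    (fun p => gen p.1 p.2)

lemma coe_T : (↑(T G) : Set (Option V → ℝ)) = SS G := by
  ext x
  simp only [T, Finset.coe_image, Finset.coe_filter, Set.mem_image, Set.mem_setOf_eq,
    Finset.mem_univ, true_and, SS, Prod.exists]
  constructor
  · rintro ⟨a, b, h, rfl⟩; exact ⟨a, b, h, rfl⟩
  · rintro ⟨a, b, h, rfl⟩; exact ⟨a, b, h, rfl⟩

lemma hullT : symEdgePolytope (suspension G) = convexHull ℝ (↑(T G) : Set (Option V → ℝ)) := by
  rw [symEdge_eq, coe_T]

lemma adj_some_none (v : V) : (suspension G).Adj (some v) none := trivial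
lemma adj_none_some (v : V) : (suspension G).Adj none (some v) := trivial
lemma adj_some_some {u v : V} : (suspension G).Adj (some u) (some v) ↔ G.Adj u v := Iff.rfl
lemma not_adj_none_none : ¬ (suspension G).Adj none none := fun h => h

def ext0 (c : V → ℝ) : Option V → ℝ := fun w => w.elim 0 c

@[simp] lemma ext0_none (c : V → ℝ) : ext0 c none = 0 := rfl
@[simp] lemma ext0_some (c : V → ℝ) (v : V) : ext0 c (some v) = c v := rfl

/-- a "good" labeling of the vertices of `G`. -/
def good (c : V → ℝ) : Prop :=
  (∀ v, c v = 1 ∨ c v = 0 ∨ c v = -1) ∧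
  (∀ u v, G.Adj u v → |c u - c v| ≤ 1) ∧
  (∀ v, c v = 0 → ∃ u, G.Adj v u ∧ c u ≠ 0)

/-- candidate facet attached to a labeling -/
def Fc (c : V → ℝ) : Set (Option V → ℝ) :=
  symEdgePolytope (suspension G) ∩ {x | L (ext0 c) x = 1}

lemma mem_P_of_adj {i j : Option V} (h : (suspension G).Adj i j) :
    gen i j ∈ symEdgePolytope (suspension G) := by
  rw [symEdge_eq]
  exact subset_convexHull ℝ _ ⟨i, j, h, rfl⟩

lemma valid {c : V → ℝ} (hc : good G c) : ∀ y ∈ SS G, L (ext0 c) y ≤ 1 := by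
  rintro y ⟨i, j, hadj, rfl⟩
  rw [L_gen]
  have habs : ∀ v, |c v| ≤ 1 := by
    intro v
    rcases hc.1 v with h | h | h <;> rw [h] <;> norm_num
  match i, j with
  | some u, some v =>
      have := hc.2.1 u v hadj
      simp only [ext0_some]
      exact (abs_le.mp this).2
  | some u, none =>
      simp only [ext0_some, ext0_none, sub_zero]
      exact (abs_le.mp (habs u)).2
  | none, some v =>
      simp only [ext0_some, ext0_none, zero_sub]
      have := (abs_le.mp (habs v)).1
      linarith
  | none, none => exact absurd hadj (not_adj_none_none G)

lemma le_on_P {c : V → ℝ} (hc : good G c) :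
    ∀ x ∈ symEdgePolytope (suspension G), L (ext0 c) x ≤ 1 := by
  rw [symEdge_eq]
  exact hull_le (valid G hc)

lemma gen_mem_Fc_pos {c : V → ℝ} {v : V} (h1 : c v = 1) :
    gen (some v) none ∈ Fc G c :=
  ⟨mem_P_of_adj G (adj_some_none G v), by simp [L_gen, h1]⟩

lemma gen_mem_Fc_neg {c : V → ℝ} {v : V} (h1 : c v = -1) :
    gen none (some v) ∈ Fc G c :=
  ⟨mem_P_of_adj G (adj_none_some G v), by simp [L_gen, h1]⟩

lemma exists_sign [Nonempty V] {c : V → ℝ} (hc : good G c) :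
    ∃ v, c v = 1 ∨ c v = -1 := by
  obtain ⟨v⟩ := ‹Nonempty V›
  rcases hc.1 v with h | h | h
  · exact ⟨v, Or.inl h⟩
  · obtain ⟨u, _, hu⟩ := hc.2.2 v h
    rcases hc.1 u with h' | h' | h'
    · exact ⟨u, Or.inl h'⟩
    · exact absurd h' hu
    · exact ⟨u, Or.inr h'⟩
  · exact ⟨v, Or.inr h⟩

lemma Fc_nonempty [Nonempty V] {c : V → ℝ} (hc : good G c) : (Fc G c).Nonempty := by
  obtain ⟨v, h | h⟩ := exists_sign G hc
  · exact ⟨_, gen_mem_Fc_pos G h⟩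
  · exact ⟨_, gen_mem_Fc_neg G h⟩

lemma Fc_exposed {c : V → ℝ} (hc : good G c) :
    IsExposed ℝ (symEdgePolytope (suspension G)) (Fc G c) := by
  intro hne
  refine ⟨L (ext0 c), ?_⟩
  obtain ⟨x₁, hx₁P, hx₁⟩ := hne
  ext x
  constructor
  · rintro ⟨hxP, hx⟩
    exact ⟨hxP, fun y hy => by rw [Set.mem_setOf_eq] at hx; rw [hx]; exact le_on_P G hc y hy⟩
  · rintro ⟨hxP, hmax⟩
    refine ⟨hxP, ?_⟩
    have h1 : L (ext0 c) x ≤ 1 := le_on_P G hc x hxP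
    have h2 : (1 : ℝ) ≤ L (ext0 c) x := by
      rw [Set.mem_setOf_eq] at hx₁
      rw [← hx₁]; exact hmax x₁ hx₁P
    exact le_antisymm h1 h2

lemma Fc_ne [Nonempty V] {c : V → ℝ} (hc : good G c) :
    Fc G c ≠ symEdgePolytope (suspension G) := by
  obtain ⟨v, h | h⟩ := exists_sign G hc
  · intro hEq
    have : gen none (some v) ∈ Fc G c := by
      rw [hEq]; exact mem_P_of_adj G (adj_none_some G v)
    have := this.2
    rw [Set.mem_setOf_eq, L_gen] at this
    simp [h] at this
    linarith
  · intro hEq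
    have : gen (some v) none ∈ Fc G c := by
      rw [hEq]; exact mem_P_of_adj G (adj_some_none G v)
    have := this.2
    rw [Set.mem_setOf_eq, L_gen] at this
    simp [h] at this
    linarith

lemma sum_zero_on_P : ∀ x ∈ symEdgePolytope (suspension G), ∑ w : Option V, x w = 0 := by
  intro x hx
  rw [symEdge_eq] at hx
  have hone : ∀ y ∈ SS G, L (fun _ => (1:ℝ)) y ≤ 0 := by
    rintro y ⟨i, j, hadj, rfl⟩; rw [L_gen]; norm_num
  have hmone : ∀ y ∈ SS G, L (fun _ => (-1:ℝ)) y ≤ 0 := by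
    rintro y ⟨i, j, hadj, rfl⟩; rw [L_gen]; norm_num
  have h1 := hull_le hone x hx
  have h2 := hull_le hmone x hx
  rw [L_apply] at h1 h2
  simp only [one_mul] at h1
  simp only [neg_one_mul, Finset.sum_neg_distrib] at h2
  linarith

lemma decomp : ∀ x ∈ symEdgePolytope (suspension G),
    x = ∑ v : V, x (some v) • gen (some v) none := by
  intro x hx
  have hs := sum_zero_on_P G x hx
  funext w
  rw [Finset.sum_apply]
  simp only [Pi.smul_apply]
  match w with
  | some u =>
      have : ∀ v : V, x (some v) • gen (some v) none (some u)
          = if v = u then x (some u) else 0 := by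
        intro v
        simp only [gen, smul_eq_mul]
        by_cases h : v = u
        · subst h; simp
        · have : ¬ (some u = some v) := by simpa [eq_comm] using fun hh : u = v => h hh.symm
          simp [this, h]
      rw [Finset.sum_congr rfl fun v _ => this v, Finset.sum_ite_eq' Finset.univ u _]
      simp
  | none =>
      have : ∀ v : V, x (some v) • gen (some v) none none = -(x (some v)) := by
        intro v; simp [gen, smul_eq_mul]
      rw [Finset.sum_congr rfl fun v _ => this v]
      rw [Fintype.sum_option] at hs
      simp only [Finset.sum_neg_distrib]
      linarith


lemma Fc_convex (c : V → ℝ) : Convex ℝ (Fc G c) := by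
  rw [Fc, symEdge_eq]
  exact (convex_convexHull ℝ _).inter (convex_hyperplane (isLinear_L (ext0 c)) 1)

lemma exposed_struct {F : Set (Option V → ℝ)}
    (hExp : IsExposed ℝ (symEdgePolytope (suspension G)) F) (hne : F.Nonempty) :
    ∃ (l : (Option V → ℝ) →L[ℝ] ℝ) (M : ℝ),
      F = symEdgePolytope (suspension G) ∩ {x | l x = M} ∧
      ∀ y ∈ symEdgePolytope (suspension G), l y ≤ M := by
  obtain ⟨l, hF⟩ := hExp hne
  obtain ⟨x₀, hx₀⟩ := hne
  have hx₀' : x₀ ∈ symEdgePolytope (suspension G) ∧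
      ∀ y ∈ symEdgePolytope (suspension G), l y ≤ l x₀ := by
    rw [hF] at hx₀; exact hx₀
  refine ⟨l, l x₀, ?_, hx₀'.2⟩
  rw [hF]
  ext x
  constructor
  · rintro ⟨hxP, hmax⟩
    exact ⟨hxP, le_antisymm (hx₀'.2 x hxP) (hmax x₀ hx₀'.1)⟩
  · rintro ⟨hxP, hx⟩
    rw [Set.mem_setOf_eq] at hx
    exact ⟨hxP, fun y hy => hx ▸ hx₀'.2 y hy⟩

lemma Fc_facet [Nonempty V] {c : V → ℝ} (hc : good G c) :
    IsFacet (symEdgePolytope (suspension G)) (Fc G c) := by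
  refine ⟨Fc_exposed G hc, Fc_ne G hc, ?_⟩
  intro F' hExp hne' hsub
  have hF'ne : F'.Nonempty := (Fc_nonempty G hc).mono hsub
  obtain ⟨l, M, hF', hle⟩ := exposed_struct G hExp hF'ne
  have hconst : ∀ x ∈ F', l x = M := by
    intro x hx; rw [hF'] at hx; exact hx.2
  have hmem : ∀ {i j : Option V}, (suspension G).Adj i j →
      L (ext0 c) (gen i j) = 1 → l (gen i j) = M := by
    intro i j h ht
    exact hconst _ (hsub ⟨mem_P_of_adj G h, ht⟩)
  have claimA : ∀ v : V, l (gen (some v) none) = c v * M := by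
    intro v
    rcases hc.1 v with h | h | h
    · rw [h, one_mul]
      exact hmem (adj_some_none G v) (by rw [L_gen]; simp [h])
    · obtain ⟨u, hadj, hu⟩ := hc.2.2 v h
      rcases hc.1 u with h' | h' | h'
      · have t1 : l (gen (some u) (some v)) = M :=
          hmem ((adj_some_some G).mpr hadj.symm) (by rw [L_gen]; simp [h, h'])
        have t2 : l (gen (some u) none) = M :=
          hmem (adj_some_none G u) (by rw [L_gen]; simp [h'])
        have hgen : gen (some v) none = gen (some u) none - gen (some u) (some v) := by
          funext k; simp only [gen, Pi.sub_apply]; ring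
        rw [h, zero_mul, hgen, map_sub, t1, t2, sub_self]
      · exact absurd h' hu
      · have t1 : l (gen (some v) (some u)) = M :=
          hmem ((adj_some_some G).mpr hadj) (by rw [L_gen]; simp [h, h'])
        have t2 : l (gen none (some u)) = M :=
          hmem (adj_none_some G u) (by rw [L_gen]; simp [h'])
        have hgen : gen (some v) none = gen (some v) (some u) - gen none (some u) := by
          funext k; simp only [gen, Pi.sub_apply]; ring
        rw [h, zero_mul, hgen, map_sub, t1, t2, sub_self]
    · rw [h]
      have t1 : l (gen none (some v)) = M :=
        hmem (adj_none_some G v) (by rw [L_gen]; simp [h])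
      have hgen : gen none (some v) = -gen (some v) none := gen_neg _ _
      rw [hgen, map_neg] at t1
      linarith
  have claimB : ∀ x ∈ symEdgePolytope (suspension G), l x = M * L (ext0 c) x := by
    intro x hxP
    have h1 : l x = ∑ v : V, x (some v) * (c v * M) := by
      conv_lhs => rw [decomp G x hxP]
      rw [map_sum]
      exact Finset.sum_congr rfl fun v _ => by rw [map_smul, smul_eq_mul, claimA v]
    have h2 : L (ext0 c) x = ∑ v : V, c v * x (some v) := by
      rw [L_apply, Fintype.sum_option]
      simp
    rw [h1, h2, Finset.mul_sum]
    exact Finset.sum_congr rfl fun v _ => by ring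
  by_cases hM : M = 0
  · exfalso
    apply hne'
    rw [hF']
    apply Set.Subset.antisymm (Set.inter_subset_left)
    intro x hxP
    refine ⟨hxP, ?_⟩
    rw [Set.mem_setOf_eq, claimB x hxP, hM, zero_mul]
  · apply Set.Subset.antisymm ?_ hsub
    intro x hx
    have hxP : x ∈ symEdgePolytope (suspension G) := by rw [hF'] at hx; exact hx.1
    have h1 : M * 1 = M * L (ext0 c) x := by
      rw [mul_one, ← claimB x hxP]
      exact (hconst x hx).symm
    exact ⟨hxP, (mul_left_cancel₀ hM h1).symm⟩

lemma mem_Fc_pos_iff {c : V → ℝ} (v : V) : gen (some v) none ∈ Fc G c ↔ c v = 1 := by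
  constructor
  · rintro ⟨-, ht⟩
    rw [Set.mem_setOf_eq, L_gen] at ht
    simpa using ht
  · exact gen_mem_Fc_pos G

lemma mem_Fc_neg_iff {c : V → ℝ} (v : V) : gen none (some v) ∈ Fc G c ↔ c v = -1 := by
  constructor
  · rintro ⟨-, ht⟩
    rw [Set.mem_setOf_eq, L_gen] at ht
    simp only [ext0_none, ext0_some, zero_sub] at ht
    linarith
  · exact gen_mem_Fc_neg G

lemma Fc_injective {c c' : V → ℝ} (hc : good G c) (hc' : good G c')
    (h : Fc G c = Fc G c') : c = c' := by
  funext v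
  have h1 : c v = 1 ↔ c' v = 1 := by
    rw [← mem_Fc_pos_iff G v, h, mem_Fc_pos_iff G v]
  have h2 : c v = -1 ↔ c' v = -1 := by
    rw [← mem_Fc_neg_iff G v, h, mem_Fc_neg_iff G v]
  rcases hc.1 v with hv | hv | hv <;> rcases hc'.1 v with hv' | hv' | hv' <;>
    rw [hv, hv'] <;> first
      | rfl
      | (exfalso; rw [hv] at h1 h2; rw [hv'] at h1 h2; norm_num at h1 <;> norm_num at h2)


noncomputable def cB (s : V → Bool) : V → ℝ := fun v =>
  if s v then 1 else if ∃ u, G.Adj v u ∧ s u then 0 else -1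

lemma cB_pos {s : V → Bool} {v : V} (h : s v = true) : cB G s v = 1 := by
  simp [cB, h]

lemma good_cB (s : V → Bool) : good G (cB G s) := by
  refine ⟨?_, ?_, ?_⟩
  · intro v; unfold cB; split_ifs <;> simp
  · intro u v h
    cases hsu : s u <;> cases hsv : s v
    · have hcu : cB G s u = 0 ∨ cB G s u = -1 := by
        unfold cB; rw [hsu]; split_ifs <;> simp_all
      have hcv : cB G s v = 0 ∨ cB G s v = -1 := by
        unfold cB; rw [hsv]; split_ifs <;> simp_all
      rcases hcu with h1 | h1 <;> rcases hcv with h2 | h2 <;>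
        rw [h1, h2, abs_le] <;> constructor <;> norm_num
    · have hcu : cB G s u = 0 := by
        unfold cB; rw [hsu, if_neg (by simp), if_pos ⟨v, h, hsv⟩]
      have hcv : cB G s v = 1 := cB_pos G hsv
      rw [hcu, hcv, abs_le]; constructor <;> norm_num
    · have hcv : cB G s v = 0 := by
        unfold cB; rw [hsv, if_neg (by simp), if_pos ⟨u, h.symm, hsu⟩]
      have hcu : cB G s u = 1 := cB_pos G hsu
      rw [hcu, hcv, abs_le]; constructor <;> norm_num
    · rw [cB_pos G hsu, cB_pos G hsv, abs_le]; constructor <;> norm_num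
  · intro v hv
    unfold cB at hv
    by_cases hsv : s v
    · rw [if_pos hsv] at hv; norm_num at hv
    · rw [if_neg hsv] at hv
      by_cases hex : ∃ u, G.Adj v u ∧ s u
      · obtain ⟨u, hadj, hsu⟩ := hex
        exact ⟨u, hadj, by rw [cB_pos G hsu]; norm_num⟩
      · rw [if_neg hex] at hv; norm_num at hv

lemma cB_injective : Function.Injective (cB G) := by
  intro s s' h
  funext v
  have hv := congrFun h v
  cases hs : s v <;> cases hs' : s' v
  · rfl
  · rw [cB_pos G hs'] at hv
    unfold cB at hv; rw [hs] at hv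
    simp only [if_false, Bool.false_eq_true] at hv
    split_ifs at hv <;> norm_num at hv
  · rw [cB_pos G hs] at hv
    unfold cB at hv; rw [hs'] at hv
    simp only [if_false, Bool.false_eq_true] at hv
    split_ifs at hv <;> norm_num at hv
  · rfl

/-- the extra labeling attached to an edge of `G`. -/
def cE (u : V) : V → ℝ := fun w => if w = u then 0 else -1

lemma good_cE {u v : V} (h : G.Adj u v) : good G (cE u) := by
  refine ⟨?_, ?_, ?_⟩
  · intro w; unfold cE; split_ifs <;> simp
  · intro a b _
    have ha : cE u a = 0 ∨ cE u a = -1 := by unfold cE; split_ifs <;> simp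
    have hb : cE u b = 0 ∨ cE u b = -1 := by unfold cE; split_ifs <;> simp
    rcases ha with h1 | h1 <;> rcases hb with h2 | h2 <;>
      rw [h1, h2, abs_le] <;> constructor <;> norm_num
  · intro w hw
    unfold cE at hw
    by_cases hwu : w = u
    · subst hwu
      refine ⟨v, h, ?_⟩
      have hne : v ≠ w := h.ne'
      unfold cE; rw [if_neg hne]; norm_num
    · rw [if_neg hwu] at hw; norm_num at hw

lemma cE_ne_cB {u v : V} (h : G.Adj u v) (s : V → Bool) : cE u ≠ cB G s := by
  intro he
  have h0 : cB G s u = 0 := by rw [← he]; simp [cE]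
  unfold cB at h0
  by_cases hsu : s u
  · rw [if_pos hsu] at h0; norm_num at h0
  · rw [if_neg hsu] at h0
    by_cases hex : ∃ z, G.Adj u z ∧ s z
    · obtain ⟨z, hadj, hsz⟩ := hex
      have hz1 : cB G s z = 1 := cB_pos G hsz
      have hzu : z ≠ u := fun hzu => G.irrefl (hzu ▸ hadj)
      have : cE u z = -1 := by unfold cE; rw [if_neg hzu]
      rw [he, hz1] at this; norm_num at this
    · rw [if_neg hex] at h0; norm_num at h0

lemma facet_nonempty [Nonempty V] {F : Set (Option V → ℝ)}
    (hF : IsFacet (symEdgePolytope (suspension G)) F) : F.Nonempty := by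
  by_contra hne
  rw [Set.not_nonempty_iff_eq_empty] at hne
  have hgood := good_cB G (fun _ => true)
  have := hF.2.2 (Fc G (cB G (fun _ => true))) (Fc_exposed G hgood) (Fc_ne G hgood)
    (by rw [hne]; exact Set.empty_subset _)
  rw [hne] at this
  exact (Fc_nonempty G hgood).ne_empty this

lemma finite_facets [Nonempty V] :
    {F : Set (Option V → ℝ) | IsFacet (symEdgePolytope (suspension G)) F}.Finite := by
  apply Set.Finite.subset (Set.Finite.image (fun A => convexHull ℝ A)
    (Set.Finite.finite_subsets (T G).finite_toSet))
  intro F hF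
  rw [Set.mem_setOf_eq] at hF
  have hne := facet_nonempty G hF
  obtain ⟨l, M, hFeq, hle⟩ := exposed_struct G hF.1 hne
  refine ⟨F ∩ ↑(T G), Set.inter_subset_right, ?_⟩
  apply Set.Subset.antisymm
  · have hconv : Convex ℝ F := by
      rw [hFeq, symEdge_eq]
      exact (convex_convexHull ℝ _).inter
        (convex_hyperplane ⟨l.map_add, fun a b => l.map_smul a b⟩ M)
    exact convexHull_min Set.inter_subset_left hconv
  · intro x hx
    have hxP : x ∈ symEdgePolytope (suspension G) := by rw [hFeq] at hx; exact hx.1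
    have hxM : l x = M := by rw [hFeq] at hx; exact hx.2
    have hhull : x ∈ convexHull ℝ (↑(T G) : Set (Option V → ℝ)) := by
      rw [← hullT]; exact hxP
    have hTle : ∀ y ∈ T G, l y ≤ M := fun y hy =>
      hle y (by rw [hullT]; exact subset_convexHull ℝ _ hy)
    refine convexHull_mono ?_ (mem_hull_max hTle hhull hxM)
    rintro y ⟨hyT, hyM⟩
    refine ⟨?_, hyT⟩
    rw [hFeq]
    exact ⟨by rw [hullT]; exact subset_convexHull ℝ _ hyT, hyM⟩

lemma star_facet_eq [Nonempty V] (hbot : G = ⊥) {F : Set (Option V → ℝ)}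
    (hF : IsFacet (symEdgePolytope (suspension G)) F) :
    ∃ s : V → Bool, F = Fc G (cB G s) := by
  have hne := facet_nonempty G hF
  obtain ⟨l, M, hFeq, hle⟩ := exposed_struct G hF.1 hne
  have hSle : ∀ y ∈ SS G, l y ≤ M := fun y hy =>
    hle y (by rw [symEdge_eq]; exact subset_convexHull ℝ _ hy)
  have hFconv : Convex ℝ F := by
    rw [hFeq, symEdge_eq]
    exact (convex_convexHull ℝ _).inter
      (convex_hyperplane ⟨l.map_add, fun a b => l.map_smul a b⟩ M)
  -- M is positive
  have hM0 : 0 ≤ M := by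
    obtain ⟨v⟩ := ‹Nonempty V›
    have h1 := hSle _ ⟨some v, none, adj_some_none G v, rfl⟩
    have h2 := hSle _ ⟨none, some v, adj_none_some G v, rfl⟩
    rw [gen_neg, map_neg] at h2
    linarith
  have hMpos : 0 < M := by
    rcases lt_or_eq_of_le hM0 with h | h
    · exact h
    · exfalso
      apply hF.2.1
      apply Set.Subset.antisymm
      · rw [hFeq]; exact Set.inter_subset_left
      · have hcover : SS G ⊆ F := by
          rintro y ⟨i, j, hadj, rfl⟩
          have h1 := hSle _ ⟨i, j, hadj, rfl⟩
          have h2 := hSle _ ⟨j, i, (suspension G).symm.symm _ _ hadj, rfl⟩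
          rw [gen_neg, map_neg] at h2
          rw [hFeq]
          refine ⟨mem_P_of_adj G hadj, ?_⟩
          rw [Set.mem_setOf_eq]
          linarith
        rw [symEdge_eq]
        exact convexHull_min hcover hFconv
  set s : V → Bool := fun v => if l (gen (some v) none) = M then true else false with hs
  refine ⟨s, ?_⟩
  have hgood := good_cB G s
  refine (hF.2.2 (Fc G (cB G s)) (Fc_exposed G hgood) (Fc_ne G hgood) ?_).symm
  -- F ⊆ Fc G (cB G s)
  intro x hx
  have hxP : x ∈ symEdgePolytope (suspension G) := by rw [hFeq] at hx; exact hx.1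
  have hxM : l x = M := by rw [hFeq] at hx; exact hx.2
  have hhull : x ∈ convexHull ℝ (↑(T G) : Set (Option V → ℝ)) := by
    rw [← hullT]; exact hxP
  have hTle : ∀ y ∈ T G, l y ≤ M := fun y hy =>
    hle y (by rw [hullT]; exact subset_convexHull ℝ _ hy)
  have hsubset : {y ∈ (↑(T G) : Set (Option V → ℝ)) | l y = M} ⊆ Fc G (cB G s) := by
    rintro y ⟨hyT, hyM⟩
    rw [coe_T] at hyT
    obtain ⟨i, j, hadj, rfl⟩ := hyT
    match i, j with
    | some a, some b =>
        rw [adj_some_some, hbot] at hadj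
        exact absurd hadj (by simp)
    | some a, none =>
        have hsa : s a = true := by
          show (if l (gen (some a) none) = M then true else false) = true
          rw [if_pos hyM]
        refine ⟨mem_P_of_adj G hadj, ?_⟩
        rw [Set.mem_setOf_eq, L_gen]
        simp [cB_pos G hsa]
    | none, some b =>
        have hneg : l (gen (some b) none) = -M := by
          rw [gen_neg, map_neg] at hyM
          linarith
        have hsb : s b = false := by
          show (if l (gen (some b) none) = M then true else false) = false
          rw [if_neg (by rw [hneg]; intro hc; linarith)]
        refine ⟨mem_P_of_adj G hadj, ?_⟩
        have hcb : cB G s b = -1 := by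
          unfold cB
          rw [if_neg (by rw [hsb]; simp), if_neg (by rw [hbot]; simp)]
        rw [Set.mem_setOf_eq, L_gen]
        simp [hcb]
    | none, none => exact absurd hadj (not_adj_none_none G)
  exact convexHull_min hsubset (Fc_convex G (cB G s)) (mem_hull_max hTle hhull hxM)


end SEP

/-- Let `G` be a graph on `[n-1]` with `n ≥ 2`. Then
`N(P_Ĝ) ≥ 2^(n-1)`, with equality if and only if `G` has no edges (so that `Ĝ` is the
star graph `K_{1,n-1}`). -/
theorem numFacets_suspension_lower_bound {V : Type*} [Fintype V] [DecidableEq V]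
    [Nonempty V] (G : SimpleGraph V) :
    2 ^ Fintype.card V ≤ numFacets (symEdgePolytope (suspension G)) ∧
      (numFacets (symEdgePolytope (suspension G)) = 2 ^ Fintype.card V ↔ G = ⊥) := by
  classical
  set f : (V → Bool) → Set (Option V → ℝ) := fun s => SEP.Fc G (SEP.cB G s) with hf
  have hinj : Function.Injective f := fun s s' h =>
    SEP.cB_injective G (SEP.Fc_injective G (SEP.good_cB G s) (SEP.good_cB G s') h)
  have hrange : Set.range f ⊆ {F | IsFacet (symEdgePolytope (suspension G)) F} := by
    rintro F ⟨s, rfl⟩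
    exact SEP.Fc_facet G (SEP.good_cB G s)
  have hfin := SEP.finite_facets G
  have hcard : (Set.range f).ncard = 2 ^ Fintype.card V := by
    rw [← Set.image_univ, Set.ncard_image_of_injective _ hinj, Set.ncard_univ,
      Nat.card_eq_fintype_card, Fintype.card_fun, Fintype.card_bool]
  have hlow : 2 ^ Fintype.card V ≤ numFacets (symEdgePolytope (suspension G)) := by
    rw [numFacets, ← hcard]
    exact Set.ncard_le_ncard hrange hfin
  refine ⟨hlow, ?_, ?_⟩
  · intro heq
    by_contra hbot
    have hex : ∃ u v, G.Adj u v := by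
      by_contra h'
      push_neg at h'
      apply hbot
      ext u v
      simp only [SimpleGraph.bot_adj, iff_false]
      exact h' u v
    obtain ⟨u, v, huv⟩ := hex
    have hgoodE := SEP.good_cE G huv
    have hnot : SEP.Fc G (SEP.cE u) ∉ Set.range f := by
      rintro ⟨s, hsEq⟩
      exact SEP.cE_ne_cB G huv s
        (SEP.Fc_injective G (SEP.good_cB G s) hgoodE hsEq).symm
    have hsub2 : insert (SEP.Fc G (SEP.cE u)) (Set.range f) ⊆
        {F | IsFacet (symEdgePolytope (suspension G)) F} := by
      rw [Set.insert_subset_iff]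
      exact ⟨SEP.Fc_facet G hgoodE, hrange⟩
    have hc2 : (insert (SEP.Fc G (SEP.cE u)) (Set.range f)).ncard
        = 2 ^ Fintype.card V + 1 := by
      rw [Set.ncard_insert_of_notMem hnot (Set.finite_range f), hcard]
    have hle2 := Set.ncard_le_ncard hsub2 hfin
    rw [hc2] at hle2
    rw [numFacets] at heq
    omega
  · intro hbot
    have hset : {F | IsFacet (symEdgePolytope (suspension G)) F} = Set.range f := by
      apply Set.Subset.antisymm ?_ hrange
      intro F hFm
      obtain ⟨s, hs⟩ := SEP.star_facet_eq G hbot hFm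
      exact ⟨s, hs.symm⟩
    rw [numFacets, hset, hcard]
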